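/- Fix L > 0 and 0 < k < 2π/L, and let G^{0,k} be the quasiperiodic Green's function at quasiperiodicity α = 0 defined by its spectral representation. Let 𝒫₁₂(x₁,x₂,x₃) = (−x₁,−x₂,x₃), let D ⊂ ℝ³ be a bounded set with 𝒫₁₂(∂D) = ∂D, let μ be the 2-dimensional Hausdorff measure restricted to ∂D, and let φ : ℝ³ → ℂ satisfy φ(𝒫₁₂ y) = −φ(y) for μ-almost every y. Let x ∈ ℝ³ be such that y ↦ G^{0,k}(x−y) φ(y) is μ-integrable and x₃ ≠ y₃ for μ-almost every y ∈ ∂D. Then ∫_{∂D} conj(G^{0,k}(x−y)) φ(y) dμ(y) = ∫_{∂D} G^{0,k}(x−y) φ(y) dμ(y). -/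

import Mathlib

open MeasureTheory Filter Topology ENNReal NNReal

noncomputable section

abbrev R2 : Type := EuclideanSpace ℝ (Fin 2)
abbrev R3 : Type := EuclideanSpace ℝ (Fin 3)

/-- The dual lattice vector `(2π/L) q` for `q ∈ ℤ²`. -/
def dualVec (L : ℝ) (q : ℤ × ℤ) : R2 :=
  (2 * Real.pi / L) • (EuclideanSpace.equiv (Fin 2) ℝ).symm ![(q.1 : ℝ), (q.2 : ℝ)]

/-- The evanescent mode associated to `q ∈ Λ* \ {0}`. -/
def evanescent (L : ℝ) (α : R2) (k : ℝ) (q : ℤ × ℤ) (x : R3) : ℂ :=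
  Complex.exp (Complex.I * (((α + dualVec L q) 0 * x 0 + (α + dualVec L q) 1 * x 1 : ℝ) : ℂ)) *
    Complex.exp ((-(Real.sqrt (‖α + dualVec L q‖ ^ 2 - k ^ 2) * |x 2|) : ℝ) : ℂ) /
      ((2 * L ^ 2 * Real.sqrt (‖α + dualVec L q‖ ^ 2 - k ^ 2) : ℝ) : ℂ)

/-- `k₃ = √(k² − |α|²)`. -/
def kthree (α : R2) (k : ℝ) : ℝ := Real.sqrt (k ^ 2 - ‖α‖ ^ 2)

/-- The quasiperiodic Green's function `G^{α,k}`, via its spectral representation. -/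
def Gf (L : ℝ) (α : R2) (k : ℝ) (x : R3) : ℂ :=
  Complex.exp (Complex.I * ((α 0 * x 0 + α 1 * x 1 : ℝ) : ℂ)) *
      Complex.exp (Complex.I * ((kthree α k * |x 2| : ℝ) : ℂ)) /
      (2 * Complex.I * ((kthree α k : ℝ) : ℂ) * ((L : ℝ) : ℂ) ^ 2) -
    ∑' q : {q : ℤ × ℤ // q ≠ 0}, evanescent L α k q.1 x

/-- The reflection `𝒫₁₂(x₁,x₂,x₃) = (−x₁,−x₂,x₃)`. -/
def P12 (x : R3) : R3 := (EuclideanSpace.equiv (Fin 3) ℝ).symm ![-(x 0), -(x 1), x 2]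

/-! ### Auxiliary lemmas -/

lemma summable_iff_ennreal (g : ℕ → ℂ) :
    Summable g ↔ (∑' n, (‖g n‖₊ : ℝ≥0∞)) ≠ ⊤ := by
  rw [ENNReal.tsum_coe_ne_top_iff_summable, ← summable_norm_iff (E := ℂ),
    ← NNReal.summable_coe]
  simp [coe_nnnorm]

lemma meas_tsum_nat {α : Type*} [MeasurableSpace α] {f : ℕ → α → ℂ}
    (hf : ∀ n, Measurable (f n)) : Measurable fun x => ∑' n, f n x := by
  set A := {x | Summable fun n => f n x} with hAdef
  have hA : MeasurableSet A := by
    have h1 : Measurable fun x => ∑' n, (‖f n x‖₊ : ℝ≥0∞) :=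
      Measurable.ennreal_tsum fun n => (hf n).nnnorm.coe_nnreal_ennreal
    have he : A = (fun x => ∑' n, (‖f n x‖₊ : ℝ≥0∞)) ⁻¹' {⊤}ᶜ := by
      ext x
      simp only [hAdef, Set.mem_setOf_eq, Set.mem_preimage, Set.mem_compl_iff,
        Set.mem_singleton_iff, summable_iff_ennreal]
    rw [he]
    exact h1 (MeasurableSet.singleton ⊤).compl
  have key : ∀ x, Tendsto (fun N => A.indicator (fun y => ∑ n ∈ Finset.range N, f n y) x)
      atTop (𝓝 (∑' n, f n x)) := by
    intro x
    by_cases hx : x ∈ A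
    · simp only [Set.indicator_of_mem hx]
      exact (hx.hasSum).tendsto_sum_nat
    · simp only [Set.indicator_of_notMem hx, tsum_eq_zero_of_not_summable hx]
      exact tendsto_const_nhds
  exact measurable_of_tendsto_metrizable
    (fun N => ((Finset.range N).measurable_sum fun n _ => hf n).indicator hA)
    (tendsto_pi_nhds.mpr key)

lemma meas_tsum {ι α : Type*} [Countable ι] [MeasurableSpace α] {f : ι → α → ℂ}
    (hf : ∀ i, Measurable (f i)) : Measurable fun x => ∑' i, f i x := by
  cases finite_or_infinite ι
  · have := Fintype.ofFinite ι
    simp only [tsum_fintype]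
    exact Finset.univ.measurable_sum fun i _ => hf i
  · have : Encodable ι := Encodable.ofCountable ι
    have : Denumerable ι := Denumerable.ofEncodableOfInfinite ι
    have he : ∀ x, ∑' i, f i x = ∑' n : ℕ, f (Denumerable.eqv ι |>.symm n) x := fun x =>
      ((Denumerable.eqv ι).symm.tsum_eq fun i => f i x).symm
    simp only [he]
    exact meas_tsum_nat fun n => hf _

lemma dualVec_neg (L : ℝ) (q : ℤ × ℤ) : dualVec L (-q) = -dualVec L q := by
  simp only [dualVec]; rw [← smul_neg]; congr 1; ext i; fin_cases i <;> simp

lemma dualVec_neg_apply (L : ℝ) (q : ℤ × ℤ) (i : Fin 2) :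
    dualVec L (-q) i = -(dualVec L q i) := by rw [dualVec_neg]; rfl

lemma conj_evanescent (L k : ℝ) (q : ℤ × ℤ) (z : R3) :
    (starRingEnd ℂ) (evanescent L 0 k q z) = evanescent L 0 k (-q) z := by
  simp only [evanescent, zero_add, map_div₀, map_mul, ← Complex.exp_conj, map_mul,
    Complex.conj_I, Complex.conj_ofReal, dualVec_neg_apply, norm_neg, dualVec_neg,
    PiLp.neg_apply]
  push_cast
  ring_nf

/-- The reindexing `q ↦ -q` of the nonzero dual lattice. -/
def negE : {q : ℤ × ℤ // q ≠ 0} ≃ {q : ℤ × ℤ // q ≠ 0} where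
  toFun q := ⟨-q.1, neg_ne_zero.mpr q.2⟩
  invFun q := ⟨-q.1, neg_ne_zero.mpr q.2⟩
  left_inv q := by simp
  right_inv q := by simp

lemma conj_evanescent_sum (L k : ℝ) (z : R3) :
    (starRingEnd ℂ) (∑' q : {q : ℤ × ℤ // q ≠ 0}, evanescent L 0 k q.1 z)
      = ∑' q : {q : ℤ × ℤ // q ≠ 0}, evanescent L 0 k q.1 z := by
  have h1 : (starRingEnd ℂ) (∑' q : {q : ℤ × ℤ // q ≠ 0}, evanescent L 0 k q.1 z)
      = ∑' q : {q : ℤ × ℤ // q ≠ 0}, (starRingEnd ℂ) (evanescent L 0 k q.1 z) := by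
    exact tsum_star
  rw [h1]
  have h2 : ∀ q : {q : ℤ × ℤ // q ≠ 0},
      (starRingEnd ℂ) (evanescent L 0 k q.1 z) = evanescent L 0 k (negE q).1 z := fun q =>
    conj_evanescent L k q.1 z
  rw [tsum_congr h2]
  exact negE.tsum_eq fun q => evanescent L 0 k q.1 z

lemma kthree_zero (k : ℝ) (hk : 0 ≤ k) : kthree 0 k = k := by
  simp [kthree, Real.sqrt_sq hk]

lemma Gf_zero_eq (L k : ℝ) (hk : 0 ≤ k) (z : R3) :
    Gf L 0 k z = Complex.exp (Complex.I * ((k * |z 2| : ℝ) : ℂ)) /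
        (2 * Complex.I * ((k : ℝ) : ℂ) * ((L : ℝ) : ℂ) ^ 2) -
      ∑' q : {q : ℤ × ℤ // q ≠ 0}, evanescent L 0 k q.1 z := by
  simp [Gf, kthree_zero k hk]

lemma conj_term1 (k L t : ℝ) (hk : 0 < k) (hL : 0 < L) :
    (starRingEnd ℂ) (Complex.exp (Complex.I * ((k * t : ℝ) : ℂ)) /
        (2 * Complex.I * ((k : ℝ) : ℂ) * ((L : ℝ) : ℂ) ^ 2))
    = Complex.exp (Complex.I * ((k * t : ℝ) : ℂ)) /
        (2 * Complex.I * ((k : ℝ) : ℂ) * ((L : ℝ) : ℂ) ^ 2)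
      + Complex.I * ((Real.cos (k * t) : ℝ) : ℂ) / (((k : ℝ) : ℂ) * ((L : ℝ) : ℂ) ^ 2) := by
  have hkc : ((k : ℝ) : ℂ) ≠ 0 := Complex.ofReal_ne_zero.mpr hk.ne'
  have hLc : ((L : ℝ) : ℂ) ≠ 0 := Complex.ofReal_ne_zero.mpr hL.ne'
  have hL2 : ((L : ℝ) : ℂ) ^ 2 ≠ 0 := pow_ne_zero 2 hLc
  rw [mul_comm Complex.I (((k * t : ℝ) : ℂ)), Complex.exp_mul_I]
  simp only [← Complex.ofReal_cos, ← Complex.ofReal_sin]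
  simp only [map_div₀, map_mul, map_add, Complex.conj_I, map_ofNat, map_pow,
    Complex.conj_ofReal]
  have hI := Complex.I_ne_zero
  have h2 : (2 * Complex.I * ((k : ℝ) : ℂ) * ((L : ℝ) : ℂ) ^ 2) ≠ 0 := by simp [hkc, hL2, hI]
  have h2' : (2 * -Complex.I * ((k : ℝ) : ℂ) * ((L : ℝ) : ℂ) ^ 2) ≠ 0 := by simp [hkc, hL2, hI]
  have hab : ((k : ℝ) : ℂ) * ((L : ℝ) : ℂ) ^ 2 ≠ 0 := mul_ne_zero hkc hL2
  rw [div_add_div _ _ h2 hab, div_eq_div_iff h2' (mul_ne_zero h2 hab)]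
  ring_nf
  simp only [Complex.I_sq, show Complex.I ^ 3 = -Complex.I by
    rw [pow_succ, Complex.I_sq]; ring,
    show Complex.I ^ 4 = 1 by rw [show (4 : ℕ) = 2 + 2 from rfl, pow_add, Complex.I_sq]; ring]
  ring

/-- The key conjugation identity `conj G = G + I cos(k|x₃|)/(k L²)` at `α = 0`. -/
lemma conj_Gf (L k : ℝ) (hk : 0 < k) (hL : 0 < L) (z : R3) :
    (starRingEnd ℂ) (Gf L 0 k z) = Gf L 0 k z +
      Complex.I * ((Real.cos (k * |z 2|) : ℝ) : ℂ) / (((k : ℝ) : ℂ) * ((L : ℝ) : ℂ) ^ 2) := by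
  rw [Gf_zero_eq L k hk.le, map_sub, conj_evanescent_sum, conj_term1 k L _ hk hL]
  ring

lemma norm_c_le (L k : ℝ) (hk : 0 < k) (hL : 0 < L) (z : R3) :
    ‖Complex.I * ((Real.cos (k * |z 2|) : ℝ) : ℂ) / (((k : ℝ) : ℂ) * ((L : ℝ) : ℂ) ^ 2)‖
      ≤ 2 * ‖Gf L 0 k z‖ := by
  set x : ℝ := Real.cos (k * |z 2|) / (k * L ^ 2) with hx
  have hc : Complex.I * ((Real.cos (k * |z 2|) : ℝ) : ℂ) / (((k : ℝ) : ℂ) * ((L : ℝ) : ℂ) ^ 2)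
      = Complex.I * ((x : ℝ) : ℂ) := by
    rw [hx]; push_cast; ring
  have him : x = -2 * (Gf L 0 k z).im := by
    have h := congrArg Complex.im (conj_Gf L k hk hL z)
    rw [Complex.conj_im, hc] at h
    simp only [Complex.add_im, Complex.mul_im, Complex.I_re, Complex.I_im,
      Complex.ofReal_re, Complex.ofReal_im] at h
    linarith
  rw [hc]
  have : ‖Complex.I * ((x : ℝ) : ℂ)‖ = |x| := by
    rw [norm_mul, Complex.norm_I, one_mul, Complex.norm_real, Real.norm_eq_abs]
  rw [this, him]
  have h1 : |(-2 : ℝ) * (Gf L 0 k z).im| = 2 * |(Gf L 0 k z).im| := by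
    rw [abs_mul]; norm_num
  rw [h1]
  have h2 : |(Gf L 0 k z).im| ≤ ‖Gf L 0 k z‖ := Complex.abs_im_le_norm _
  linarith

lemma cont_coord (i : Fin 3) : Continuous fun z : R3 => z i := by
  exact (EuclideanSpace.proj (𝕜 := ℝ) i).continuous

lemma measurable_Gf (L k : ℝ) : Measurable (Gf L 0 k) := by
  have hcoord : ∀ i : Fin 3, Continuous fun z : R3 => z i := cont_coord
  have habs : Continuous fun z : R3 => |z 2| := (hcoord 2).abs
  have hterm1 : Continuous fun z : R3 =>
      Complex.exp (Complex.I * (((0 : R2) 0 * z 0 + (0 : R2) 1 * z 1 : ℝ) : ℂ)) *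
        Complex.exp (Complex.I * ((kthree 0 k * |z 2| : ℝ) : ℂ)) /
        (2 * Complex.I * ((kthree 0 k : ℝ) : ℂ) * ((L : ℝ) : ℂ) ^ 2) := by
    apply Continuous.div_const
    apply Continuous.mul
    · exact Complex.continuous_exp.comp <| (continuous_const.mul <|
        Complex.continuous_ofReal.comp <| ((continuous_const.mul (hcoord 0)).add
          (continuous_const.mul (hcoord 1))))
    · exact Complex.continuous_exp.comp <| (continuous_const.mul <|
        Complex.continuous_ofReal.comp <| continuous_const.mul habs)
  have hev : ∀ q : {q : ℤ × ℤ // q ≠ 0}, Measurable fun z : R3 => evanescent L 0 k q.1 z := by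
    intro q
    apply Continuous.measurable
    unfold evanescent
    apply Continuous.div_const
    apply Continuous.mul
    · exact Complex.continuous_exp.comp <| (continuous_const.mul <|
        Complex.continuous_ofReal.comp <| ((continuous_const.mul (hcoord 0)).add
          (continuous_const.mul (hcoord 1))))
    · exact Complex.continuous_exp.comp <| (Complex.continuous_ofReal.comp <|
        (continuous_const.mul habs).neg)
  exact (hterm1.measurable).sub (meas_tsum hev)

/-! ### `P12` as an isometry -/

lemma P12_apply_0 (x : R3) : P12 x 0 = -(x 0) := rfl
lemma P12_apply_1 (x : R3) : P12 x 1 = -(x 1) := rfl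
lemma P12_apply_2 (x : R3) : P12 x 2 = x 2 := rfl

lemma P12_involutive : Function.Involutive P12 := by
  intro x
  ext i
  fin_cases i <;> simp [P12]

/-- `P12` as an isometry equivalence. -/
def P12E : R3 ≃ᵢ R3 where
  toFun := P12
  invFun := P12
  left_inv := P12_involutive
  right_inv := P12_involutive
  isometry_toFun := by
    apply Isometry.of_dist_eq
    intro x y
    rw [EuclideanSpace.dist_eq, EuclideanSpace.dist_eq]
    congr 1
    rw [Fin.sum_univ_three, Fin.sum_univ_three]
    simp only [P12_apply_0, P12_apply_1, P12_apply_2, Real.dist_eq]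
    rw [show -x 0 - -y 0 = -(x 0 - y 0) by ring, show -x 1 - -y 1 = -(x 1 - y 1) by ring,
      abs_neg, abs_neg]

lemma P12_measurable : Measurable P12 := P12E.continuous.measurable

lemma P12_measurableEmbedding : MeasurableEmbedding P12 :=
  P12E.toHomeomorph.measurableEmbedding

lemma P12_measurePreserving (D : Set R3) (hsym : P12 '' frontier D = frontier D) :
    MeasurePreserving P12 ((μH[2] : Measure R3).restrict (frontier D))
      ((μH[2] : Measure R3).restrict (frontier D)) := by
  refine ⟨P12_measurable, ?_⟩
  have hmap : Measure.map P12 (μH[2] : Measure R3) = μH[2] := P12E.map_hausdorffMeasure 2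
  have hF : MeasurableSet (frontier D) := isClosed_frontier.measurableSet
  have hpre : P12 ⁻¹' frontier D = frontier D := by
    ext z
    simp only [Set.mem_preimage]
    constructor
    · intro hz
      have : P12 (P12 z) ∈ P12 '' frontier D := Set.mem_image_of_mem _ hz
      rwa [P12_involutive z, hsym] at this
    · intro hz
      have : P12 z ∈ P12 '' frontier D := Set.mem_image_of_mem _ hz
      rwa [hsym] at this
  calc Measure.map P12 ((μH[2] : Measure R3).restrict (frontier D))
      = Measure.map P12 ((μH[2] : Measure R3).restrict (P12 ⁻¹' frontier D)) := by rw [hpre]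
    _ = (Measure.map P12 (μH[2] : Measure R3)).restrict (frontier D) :=
        (Measure.restrict_map P12_measurable hF).symm
    _ = (μH[2] : Measure R3).restrict (frontier D) := by rw [hmap]

/-- For a `𝒫₁₂`-symmetric structure and a density `φ` that is odd under `𝒫₁₂`, the single
layer potential with conjugated kernel agrees with the single layer potential
(equation (5.1) of the paper). -/
theorem conjKernel_singleLayer (L : ℝ) (hL : 0 < L) (k : ℝ) (hk : 0 < k)
    (hk2 : k < 2 * Real.pi / L)
    (D : Set R3) (hD : Bornology.IsBounded D) (hsym : P12 '' frontier D = frontier D)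
    (φ : R3 → ℂ)
    (hodd : ∀ᵐ y ∂((μH[2] : Measure R3).restrict (frontier D)), φ (P12 y) = -φ y)
    (x : R3)
    (hint : Integrable (fun y => Gf L 0 k (x - y) * φ y)
      ((μH[2] : Measure R3).restrict (frontier D)))
    (hx : ∀ᵐ y ∂((μH[2] : Measure R3).restrict (frontier D)), x 2 ≠ y 2) :
    ∫ y, (starRingEnd ℂ) (Gf L 0 k (x - y)) * φ y
        ∂((μH[2] : Measure R3).restrict (frontier D)) =
      ∫ y, Gf L 0 k (x - y) * φ y ∂((μH[2] : Measure R3).restrict (frontier D)) := by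
  set ν := (μH[2] : Measure R3).restrict (frontier D) with hν
  set c : R3 → ℂ := fun z =>
    Complex.I * ((Real.cos (k * |z 2|) : ℝ) : ℂ) / (((k : ℝ) : ℂ) * ((L : ℝ) : ℂ) ^ 2) with hc
  set g : R3 → ℂ := fun y => Gf L 0 k (x - y) * φ y with hg
  set h : R3 → ℂ := fun y => c (x - y) * φ y with hh
  -- pointwise decomposition of the conjugated kernel
  have hpt : ∀ y, (starRingEnd ℂ) (Gf L 0 k (x - y)) * φ y = g y + h y := by
    intro y
    rw [hg, hh, hc]
    simp only
    rw [conj_Gf L k hk hL (x - y)]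
    ring
  -- integrability of h
  have hGm : Measurable (Gf L 0 k) := measurable_Gf L k
  have hcm : Measurable c := by
    apply Continuous.measurable
    apply Continuous.div_const
    exact continuous_const.mul <| Complex.continuous_ofReal.comp <|
      (Real.continuous_cos.comp (continuous_const.mul (cont_coord 2).abs))
  have hczero : ∀ z, Gf L 0 k z = 0 → c z = 0 := by
    intro z hz
    have hb := norm_c_le L k hk hL z
    rw [hz] at hb
    simp only [norm_zero, mul_zero] at hb
    have : ‖c z‖ = 0 := le_antisymm hb (norm_nonneg _)
    simpa using this
  have hkey : ∀ y, h y = (c (x - y) / Gf L 0 k (x - y)) * g y := by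
    intro y
    by_cases hz : Gf L 0 k (x - y) = 0
    · simp [hh, hg, hz, hczero (x - y) hz]
    · simp only [hh, hg]
      field_simp
  have hsubm : Measurable fun y : R3 => x - y :=
    (continuous_const.sub continuous_id).measurable
  have hratiom : Measurable fun y : R3 => c (x - y) / Gf L 0 k (x - y) :=
    ((hcm.comp hsubm).div (hGm.comp hsubm))
  have hasm : AEStronglyMeasurable h ν := by
    rw [show h = fun y => (c (x - y) / Gf L 0 k (x - y)) * g y from funext hkey]
    exact hratiom.aestronglyMeasurable.mul hint.1
  have hbound : ∀ᵐ y ∂ν, ‖h y‖ ≤ 2 * ‖g y‖ := by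
    refine Eventually.of_forall fun y => ?_
    rw [hh, hg]
    simp only [norm_mul]
    rw [show (2 : ℝ) * (‖Gf L 0 k (x - y)‖ * ‖φ y‖) = (2 * ‖Gf L 0 k (x - y)‖) * ‖φ y‖ by ring]
    exact mul_le_mul_of_nonneg_right (norm_c_le L k hk hL (x - y)) (norm_nonneg _)
  have hinth : Integrable h ν := by
    refine Integrable.mono' (hint.norm.const_mul 2) hasm ?_
    exact hbound
  -- the integral of h vanishes by the P12-symmetry
  have hmp := P12_measurePreserving D hsym
  have h0 : ∫ y, h y ∂ν = ∫ y, h (P12 y) ∂ν :=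
    (hmp.integral_comp P12_measurableEmbedding h).symm
  have h1 : ∀ᵐ y ∂ν, h (P12 y) = -h y := by
    refine hodd.mono fun y hy => ?_
    rw [hh]
    simp only
    have h2 : c (x - P12 y) = c (x - y) := rfl
    rw [h2, hy]
    ring
  have hzero : ∫ y, h y ∂ν = 0 := by
    have h3 : ∫ y, h (P12 y) ∂ν = -∫ y, h y ∂ν := by
      rw [integral_congr_ae h1, integral_neg]
    have h4 : ∫ y, h y ∂ν = -∫ y, h y ∂ν := h0.trans h3
    have h5 : (2 : ℂ) * ∫ y, h y ∂ν = 0 := by linear_combination h4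
    have h6 := mul_eq_zero.mp h5
    simpa using h6
  -- conclusion
  calc ∫ y, (starRingEnd ℂ) (Gf L 0 k (x - y)) * φ y ∂ν
      = ∫ y, (g y + h y) ∂ν := by
        apply integral_congr_ae
        exact Eventually.of_forall hpt
    _ = (∫ y, g y ∂ν) + ∫ y, h y ∂ν := integral_add hint hinth
    _ = ∫ y, g y ∂ν := by rw [hzero, add_zero]

end
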